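/- Let I be an ideal of R, let 𝒫 be a projectivity class closed under direct summands, let P be a projective module with an epimorphism f : P → M. If P ⊕ M has a 𝒫-projective I-cover, then M has a projective I-cover. -/

import Mathlib

open Submodule Function LinearMap

universe u v w x y

section Defs

variable (R : Type u) [Ring R]

/-- `I` (a left ideal) is a two-sided ideal. -/
def IsTwoSidedI (I : Ideal R) : Prop := ∀ a b : R, a ∈ I → a * b ∈ I

variable {M : Type v} [AddCommGroup M] [Module R M]

/-- `N` is PSD in the submodule `T` of `M` (taking `T = ⊤` gives "PSD in `M`"):
whenever `N + X = T`, there is a projective direct summand `S` of `T` with `S ≤ N`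
and `T = S ⊕ X`. -/
def PSDIn (T N : Submodule R M) : Prop :=
  ∀ X : Submodule R M, X ≤ T → N ⊔ X = T →
    ∃ S : Submodule R M, Module.Projective R S ∧ S ≤ N ∧ S ⊔ X = T ∧ S ⊓ X = ⊥

/-- `M` is PSD for the ideal `I`: every submodule of `IM` is PSD in `M`. -/
def PSDFor (I : Ideal R) (M : Type v) [AddCommGroup M] [Module R M] : Prop :=
  ∀ N : Submodule R M, N ≤ I • (⊤ : Submodule R M) → PSDIn R ⊤ N

/-- `R` is a left PSD ring for `I`: every finitely generated free left `R`-module is PSD for `I`. -/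
def PSDRing (I : Ideal R) : Prop :=
  ∀ (F : Type u) [AddCommGroup F] [Module R F] [Module.Free R F] [Module.Finite R F],
    PSDFor R I F

/-- `f : P → M` is a projective `I`-cover. -/
def IsProjICover (I : Ideal R) {P : Type w} [AddCommGroup P] [Module R P]
    (f : P →ₗ[R] M) : Prop :=
  Surjective f ∧ Module.Projective R P ∧
    LinearMap.ker f ≤ I • (⊤ : Submodule R P) ∧ PSDIn R ⊤ (LinearMap.ker f)

/-- A projective `I`-cover of `M`. -/
structure ProjICover (I : Ideal R) (M : Type v) [AddCommGroup M] [Module R M] where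
  P : Type w
  [addP : AddCommGroup P]
  [modP : Module R P]
  f : P →ₗ[R] M
  cover : IsProjICover R I f

/-- `R` is `I`-semiregular. -/
def ISemiregular (I : Ideal R) : Prop :=
  ∀ a : R, ∃ P Q : Submodule R R, IsCompl P Q ∧ Module.Projective R P ∧
    P ≤ Submodule.span R {a} ∧ Submodule.span R {a} ⊓ Q ≤ I

/-- `R` is `I`-semiperfect. -/
def ISemiperfect (I : Ideal R) : Prop :=
  ∀ K : Submodule R R, ∃ A B : Submodule R R, IsCompl A B ∧ Module.Projective R A ∧
    A ≤ K ∧ K ⊓ B ≤ I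

end Defs




section Defs2

variable (R : Type u) [Ring R]
variable {M : Type v} [AddCommGroup M] [Module R M]

/-- A submodule `S` is small in the submodule `T` (take `T = ⊤` for "small in `M`"). -/
def SmallIn (T S : Submodule R M) : Prop :=
  ∀ X : Submodule R M, X ≤ T → S ⊔ X = T → X = T

/-- `K` is DM in the submodule `T` of `M`: whenever `K + X = T` there is a direct
summand `S` of `T` with `S ≤ K` and `S + X = T`. -/
def DMIn (T K : Submodule R M) : Prop :=
  ∀ X : Submodule R M, X ≤ T → K ⊔ X = T →
    ∃ S : Submodule R M, S ≤ K ∧ (∃ S' : Submodule R M, S ⊔ S' = T ∧ S ⊓ S' = ⊥) ∧ S ⊔ X = T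

/-- `M` is DM for `I`: every submodule of `IM` is DM in `M`. -/
def DMFor (I : Ideal R) (M : Type v) [AddCommGroup M] [Module R M] : Prop :=
  ∀ K : Submodule R M, K ≤ I • (⊤ : Submodule R M) → DMIn R ⊤ K

/-- `R` is a left DM ring for `I`. -/
def DMRing (I : Ideal R) : Prop :=
  ∀ (F : Type u) [AddCommGroup F] [Module R F] [Module.Free R F] [Module.Finite R F],
    DMFor R I F

/-- `M` is an `I`-supplemented module. -/
def ISupplemented (I : Ideal R) (M : Type v) [AddCommGroup M] [Module R M] : Prop :=
  ∀ X : Submodule R M, ∃ Y : Submodule R M, Module.Projective R Y ∧ X ⊔ Y = ⊤ ∧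
    X ⊓ Y ≤ I • Y ∧ DMIn R Y (X ⊓ Y)

/-- `M` is a finitely `I`-supplemented module. -/
def FinISupplemented (I : Ideal R) (M : Type v) [AddCommGroup M] [Module R M] : Prop :=
  ∀ X : Submodule R M, X.FG → ∃ Y : Submodule R M, Module.Projective R Y ∧ X ⊔ Y = ⊤ ∧
    X ⊓ Y ≤ I • Y ∧ DMIn R Y (X ⊓ Y)

/-- `M` is a supplemented module. -/
def Supplemented (M : Type v) [AddCommGroup M] [Module R M] : Prop :=
  ∀ X : Submodule R M, ∃ Y : Submodule R M, X ⊔ Y = ⊤ ∧ SmallIn R Y (X ⊓ Y)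

/-- `M` is an `I`-semiperfect module. -/
def ISemiperfectMod (I : Ideal R) (M : Type v) [AddCommGroup M] [Module R M] : Prop :=
  ∀ K : Submodule R M, ∃ A B : Submodule R M, IsCompl A B ∧ Module.Projective R A ∧
    A ≤ K ∧ K ⊓ B ≤ I • (⊤ : Submodule R M)

/-- The radical of `M`: the intersection of all maximal submodules. -/
def RadM (M : Type v) [AddCommGroup M] [Module R M] : Submodule R M :=
  sInf {N : Submodule R M | IsCoatom N}

/-- The socle of `M`: the sum of all simple submodules. -/
def SocM (M : Type v) [AddCommGroup M] [Module R M] : Submodule R M :=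
  sSup {N : Submodule R M | IsSimpleModule R N}

/-- `P` is locally projective (lifting version). -/
def LocallyProjective (P : Type w) [AddCommGroup P] [Module R P] : Prop :=
  ∀ (A : Type x) (B : Type y) [AddCommGroup A] [Module R A] [AddCommGroup B] [Module R B]
    (g : A →ₗ[R] B) (f : P →ₗ[R] B), Surjective g →
      ∀ P₀ : Submodule R P, P₀.FG → ∃ h : P →ₗ[R] A, ∀ p ∈ P₀, f p = g (h p)

/-- `P` is locally projective (splitting version). -/
def LocallyProjectiveB (P : Type w) [AddCommGroup P] [Module R P] : Prop :=
  ∀ (N : Type x) [AddCommGroup N] [Module R N] (g : N →ₗ[R] P), Surjective g →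
    ∀ P₀ : Submodule R P, P₀.FG → ∃ h : P →ₗ[R] N, ∀ p ∈ P₀, g (h p) = p


/-- A locally projective `I`-cover of `M`. -/
structure LocProjICover (I : Ideal R) (M : Type v) [AddCommGroup M] [Module R M] where
  P : Type w
  [addP : AddCommGroup P]
  [modP : Module R P]
  f : P →ₗ[R] M
  surj : Surjective f
  locProj : LocallyProjective.{u, w, x, y} R P
  ker_le : LinearMap.ker f ≤ I • (⊤ : Submodule R P)
  psd : PSDIn R ⊤ (LinearMap.ker f)

/-- A locally projective cover of `M`. -/
structure LocProjCover (M : Type v) [AddCommGroup M] [Module R M] where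
  P : Type w
  [addP : AddCommGroup P]
  [modP : Module R P]
  f : P →ₗ[R] M
  surj : Surjective f
  locProj : LocallyProjective.{u, w, x, y} R P
  ker_small : SmallIn R ⊤ (LinearMap.ker f)

/-- A projective cover of `M`. -/
structure ProjCover (M : Type v) [AddCommGroup M] [Module R M] where
  P : Type w
  [addP : AddCommGroup P]
  [modP : Module R P]
  f : P →ₗ[R] M
  surj : Surjective f
  proj : Module.Projective R P
  ker_small : SmallIn R ⊤ (LinearMap.ker f)

/-- `M` is self-projective (quasi-projective). -/
def SelfProjective (M : Type v) [AddCommGroup M] [Module R M] : Prop :=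
  ∀ (K : Submodule R M) (f : M →ₗ[R] M ⧸ K), ∃ h : M →ₗ[R] M, K.mkQ ∘ₗ h = f

/-- A projectivity class of `R`-modules (in a fixed universe). -/
def ProjectivityClass
    (Pc : ∀ (N : Type w) [AddCommGroup N] [Module R N], Prop) : Prop :=
  (∀ (N : Type w) [AddCommGroup N] [Module R N], SelfProjective R N → Pc N) ∧
  (∀ (N P : Type w) [AddCommGroup N] [Module R N] [AddCommGroup P] [Module R P]
      (f : P →ₗ[R] N), Surjective f → Module.Projective R P → Pc (P × N) →
        Module.Projective R N)

/-- `Pc` is closed under direct summands. -/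
def ClosedUnderSummands
    (Pc : ∀ (N : Type w) [AddCommGroup N] [Module R N], Prop) : Prop :=
  ∀ (N P : Type w) [AddCommGroup N] [Module R N] [AddCommGroup P] [Module R P],
    Pc P → ∀ (i : N →ₗ[R] P) (p : P →ₗ[R] N), p ∘ₗ i = LinearMap.id → Pc N

/-- A `Pc`-projective `I`-cover of `M`. -/
structure PProjICover (Pc : ∀ (N : Type w) [AddCommGroup N] [Module R N], Prop)
    (I : Ideal R) (M : Type v) [AddCommGroup M] [Module R M] where
  Q : Type w
  [addQ : AddCommGroup Q]
  [modQ : Module R Q]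
  g : Q →ₗ[R] M
  surj : Surjective g
  memP : Pc Q
  ker_le : LinearMap.ker g ≤ I • (⊤ : Submodule R Q)
  psd : PSDIn R ⊤ (LinearMap.ker g)

end Defs2

section AuxHelpers

variable {R : Type u} [Ring R]

private theorem aux_isCompl_range_ker {A : Type*} {B : Type*} [AddCommGroup A] [Module R A]
    [AddCommGroup B] [Module R B] (π : A →ₗ[R] B) (s : B →ₗ[R] A)
    (h : π ∘ₗ s = LinearMap.id) : IsCompl (LinearMap.range s) (LinearMap.ker π) := by
  have hps : ∀ b, π (s b) = b := fun b => LinearMap.congr_fun h b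
  constructor
  · rw [disjoint_iff, eq_bot_iff]
    intro x hx
    obtain ⟨hx1, hx2⟩ := Submodule.mem_inf.mp hx
    obtain ⟨b, rfl⟩ := hx1
    have hb : b = 0 := by
      have h1 : π (s b) = b := hps b
      rw [LinearMap.mem_ker.mp hx2] at h1
      exact h1.symm
    rw [hb, map_zero]
    exact Submodule.zero_mem _
  · rw [codisjoint_iff, eq_top_iff]
    intro x _
    have hmem : x - s (π x) ∈ LinearMap.ker π := by
      rw [LinearMap.mem_ker, map_sub, hps, sub_self]
    exact Submodule.mem_sup.mpr ⟨s (π x), ⟨π x, rfl⟩, x - s (π x), hmem, by abel⟩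

end AuxHelpers

theorem stmt12 {R : Type u} [Ring R] (I : Ideal R) (hI : IsTwoSidedI R I)
    (Pc : ∀ (N : Type w) [AddCommGroup N] [Module R N], Prop)
    (hPc : ProjectivityClass R Pc) (hcl : ClosedUnderSummands R Pc)
    {P M : Type w} [AddCommGroup P] [Module R P] [AddCommGroup M] [Module R M]
    [Module.Projective R P] (f : P →ₗ[R] M) (hf : Surjective f)
    (h : Nonempty (PProjICover R Pc I (P × M))) :
    Nonempty (ProjICover.{u, w, w} R I M) := by
  obtain ⟨C⟩ := h
  letI : AddCommGroup C.Q := C.addQ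
  letI : Module R C.Q := C.modQ
  classical
  set Q := C.Q with hQdef
  letI : AddCommGroup Q := C.addQ
  letI : Module R Q := C.modQ
  let g : Q →ₗ[R] P × M := C.g
  have hgsurj : Surjective g := C.surj
  set K : Submodule R Q := LinearMap.ker g with hKdef
  let p1g : Q →ₗ[R] P := LinearMap.fst R P M ∘ₗ g
  have hp1g : Surjective p1g := by
    intro p
    obtain ⟨q, hq⟩ := hgsurj (p, 0)
    refine ⟨q, ?_⟩
    show (LinearMap.fst R P M) (g q) = p
    rw [hq]
    rfl
  obtain ⟨s, hs⟩ := Module.projective_lifting_property p1g LinearMap.id hp1g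
  set Xh : Submodule R Q := LinearMap.ker p1g with hXhdef
  have hcompl : IsCompl (LinearMap.range s) Xh := aux_isCompl_range_ker p1g s hs
  have hmapinj : Function.Injective (Submodule.map Xh.subtype) :=
    Submodule.map_injective_of_injective Xh.injective_subtype
  have hKXh : K ≤ Xh := by
    intro k hk
    refine LinearMap.mem_ker.mpr ?_
    show (LinearMap.fst R P M) (g k) = 0
    rw [LinearMap.mem_ker.mp hk, map_zero]
  -- the candidate cover map
  let φ : ↥Xh →ₗ[R] M := LinearMap.snd R P M ∘ₗ g ∘ₗ Xh.subtype
  have hφsurj : Surjective φ := by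
    intro m
    obtain ⟨q, hq⟩ := hgsurj (0, m)
    have hqX : q ∈ Xh := by
      refine LinearMap.mem_ker.mpr ?_
      show (LinearMap.fst R P M) (g q) = 0
      rw [hq]
      rfl
    refine ⟨⟨q, hqX⟩, ?_⟩
    show (LinearMap.snd R P M) (g q) = m
    rw [hq]
    rfl
  have hkerφ : LinearMap.ker φ = Submodule.comap Xh.subtype K := by
    ext x
    constructor
    · intro hx
      have hsnd : (LinearMap.snd R P M) (g (x : Q)) = 0 := LinearMap.mem_ker.mp hx
      have hfst : (LinearMap.fst R P M) (g (x : Q)) = 0 := LinearMap.mem_ker.mp x.2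
      exact Submodule.mem_comap.mpr (LinearMap.mem_ker.mpr (Prod.ext hfst hsnd))
    · intro hx
      have h0 : g (x : Q) = 0 := LinearMap.mem_ker.mp (Submodule.mem_comap.mp hx)
      refine LinearMap.mem_ker.mpr ?_
      show (LinearMap.snd R P M) (g (x : Q)) = 0
      rw [h0, map_zero]
  -- kernel is inside I • ⊤
  have hker_le : LinearMap.ker φ ≤ I • (⊤ : Submodule R ↥Xh) := by
    intro x hx
    have hxK : (x : Q) ∈ K := Submodule.mem_comap.mp (hkerφ ▸ hx)
    have hxI : (x : Q) ∈ I • (⊤ : Submodule R Q) := C.ker_le hxK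
    have hxpr : Submodule.linearProjOfIsCompl Xh (LinearMap.range s) hcompl.symm (x : Q) = x :=
      Submodule.linearProjOfIsCompl_apply_left hcompl.symm x
    rw [← hxpr]
    have hmem : Submodule.linearProjOfIsCompl Xh (LinearMap.range s) hcompl.symm (x : Q) ∈
        Submodule.map (Submodule.linearProjOfIsCompl Xh (LinearMap.range s) hcompl.symm)
          (I • (⊤ : Submodule R Q)) := Submodule.mem_map_of_mem hxI
    rw [Submodule.map_smul''] at hmem
    exact SetLike.le_def.mp (smul_mono_right I le_top) hmem
  -- the PSD property
  have hpsd : PSDIn R ⊤ (LinearMap.ker φ) := by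
    intro X' _ hsup
    set Y : Submodule R Q := Submodule.map Xh.subtype X' with hYdef
    have hYXh : Y ≤ Xh := hYdef ▸ Submodule.map_subtype_le Xh X'
    have hKY : K ⊔ Y = Xh := by
      have hthis := congrArg (Submodule.map Xh.subtype) hsup
      rw [Submodule.map_sup, hkerφ, Submodule.map_comap_subtype,
        Submodule.map_subtype_top, inf_eq_right.mpr hKXh] at hthis
      rw [hYdef]
      exact hthis
    have hKsup : K ⊔ (Y ⊔ LinearMap.range s) = ⊤ := by
      rw [← sup_assoc, hKY, sup_comm]
      exact codisjoint_iff.mp hcompl.codisjoint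
    obtain ⟨S, hSproj, hSK, hSsup, hSinf⟩ := C.psd (Y ⊔ LinearMap.range s) le_top hKsup
    have hSXh : S ≤ Xh := hSK.trans hKXh
    have hSY_sup : S ⊔ Y = Xh := by
      refine le_antisymm (sup_le hSXh hYXh) ?_
      intro x hx
      have hxtop : x ∈ S ⊔ (Y ⊔ LinearMap.range s) := hSsup ▸ Submodule.mem_top
      obtain ⟨a, ha, w, hw, rfl⟩ := Submodule.mem_sup.mp hxtop
      obtain ⟨y, hy, r, hr, rfl⟩ := Submodule.mem_sup.mp hw
      have hrX : r ∈ Xh := by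
        have h1 : a + (y + r) - a - y ∈ Xh := sub_mem (sub_mem hx (hSXh ha)) (hYXh hy)
        have h2 : a + (y + r) - a - y = r := by abel
        rwa [h2] at h1
      have hr0 : r = 0 := by
        have hmem : r ∈ LinearMap.range s ⊓ Xh := Submodule.mem_inf.mpr ⟨hr, hrX⟩
        rw [hcompl.disjoint.eq_bot] at hmem
        exact (Submodule.mem_bot R).mp hmem
      refine Submodule.mem_sup.mpr ⟨a, ha, y + r, ?_, rfl⟩
      rw [hr0, add_zero]
      exact hy
    have hSY_inf : S ⊓ Y = ⊥ := by
      rw [eq_bot_iff]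
      intro x hx
      obtain ⟨h1, h2⟩ := Submodule.mem_inf.mp hx
      have hmem : x ∈ S ⊓ (Y ⊔ LinearMap.range s) :=
        Submodule.mem_inf.mpr ⟨h1, Submodule.mem_sup_left h2⟩
      rw [hSinf] at hmem
      exact hmem
    refine ⟨Submodule.comap Xh.subtype S, ?_, ?_, ?_, ?_⟩
    · haveI := hSproj
      exact Module.Projective.of_equiv (Submodule.comapSubtypeEquivOfLe hSXh).symm
    · rw [hkerφ]
      exact Submodule.comap_mono hSK
    · apply hmapinj
      rw [Submodule.map_sup, Submodule.map_comap_subtype, Submodule.map_subtype_top,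
        inf_eq_right.mpr hSXh, ← hYdef]
      exact hSY_sup
    · apply hmapinj
      rw [Submodule.map_inf _ Xh.injective_subtype, Submodule.map_comap_subtype,
        inf_eq_right.mpr hSXh, ← hYdef, Submodule.map_bot]
      exact hSY_inf
  -- now projectivity of Xh
  let idf : P × P →ₗ[R] P × M := LinearMap.prodMap LinearMap.id f
  have hidf : Surjective idf := by
    rintro ⟨a, m⟩
    obtain ⟨b, hb⟩ := hf m
    refine ⟨(a, b), ?_⟩
    show ((a : P), f b) = (a, m)
    rw [hb]
  obtain ⟨hh, hhh⟩ := Module.projective_lifting_property g idf hgsurj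
  have hgh : ∀ x, g (hh x) = idf x := LinearMap.congr_fun hhh
  set T : Submodule R Q := LinearMap.range hh with hTdef
  have hKT : K ⊔ T = ⊤ := by
    rw [eq_top_iff]
    intro q _
    obtain ⟨x, hx⟩ := hidf (g q)
    refine Submodule.mem_sup.mpr ⟨q - hh x, ?_, hh x, LinearMap.mem_range.mpr ⟨x, rfl⟩, by abel⟩
    refine LinearMap.mem_ker.mpr ?_
    rw [map_sub, hgh, hx, sub_self]
  obtain ⟨S₁, hS₁proj, hS₁K, hS₁sup, hS₁inf⟩ := C.psd T le_top hKT
  have hS₁Xh : S₁ ≤ Xh := hS₁K.trans hKXh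
  set X : Submodule R Q := Xh ⊓ T with hXdef
  have hXT : X ≤ T := inf_le_right
  have hXXh : X ≤ Xh := inf_le_left
  have hdec_sup : S₁ ⊔ X = Xh := by
    have h1 : (S₁ ⊔ T) ⊓ Xh = S₁ ⊔ (T ⊓ Xh) := sup_inf_assoc_of_le T hS₁Xh
    rw [hS₁sup, top_inf_eq] at h1
    rw [hXdef, inf_comm Xh T]
    exact h1.symm
  have hdec_inf : S₁ ⊓ X = ⊥ := by
    rw [eq_bot_iff]
    intro x hx
    obtain ⟨h1, h2⟩ := Submodule.mem_inf.mp hx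
    rw [hXdef] at h2
    have hmem : x ∈ S₁ ⊓ T := Submodule.mem_inf.mpr ⟨h1, (Submodule.mem_inf.mp h2).2⟩
    rw [hS₁inf] at hmem
    exact hmem
  have hcomplT : IsCompl S₁ T := ⟨disjoint_iff.mpr hS₁inf, codisjoint_iff.mpr hS₁sup⟩
  have hPcT : Pc ↥T :=
    hcl ↥T Q C.memP T.subtype (Submodule.linearProjOfIsCompl T S₁ hcomplT.symm)
      (Submodule.linearProjOfIsCompl_comp_subtype hcomplT.symm)
  let q1 : ↥T →ₗ[R] P := p1g ∘ₗ T.subtype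
  let hhT : P × P →ₗ[R] ↥T := hh.rangeRestrict
  let s2 : P →ₗ[R] ↥T := hhT ∘ₗ LinearMap.inl R P P
  have hq1s2 : q1 ∘ₗ s2 = LinearMap.id := by
    ext p
    show (LinearMap.fst R P M) (g (hh (p, 0))) = p
    rw [hgh]
    rfl
  have hcomplT2 : IsCompl (LinearMap.range s2) (LinearMap.ker q1) :=
    aux_isCompl_range_ker q1 s2 hq1s2
  have hPcPK : Pc (P × ↥(LinearMap.ker q1)) := by
    refine hcl _ ↥T hPcT
      (LinearMap.coprod s2 (LinearMap.ker q1).subtype)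
      (LinearMap.prod q1
        (Submodule.projectionOnto (LinearMap.ker q1) (LinearMap.range s2) hcomplT2.symm))
      ?_
    apply LinearMap.ext
    rintro ⟨p, x⟩
    refine Prod.ext ?_ ?_
    · show q1 (s2 p + (x : ↥T)) = p
      have h1 : q1 (s2 p) = p := LinearMap.congr_fun hq1s2 p
      have h2 : q1 (x : ↥T) = 0 := LinearMap.mem_ker.mp x.2
      rw [map_add, h1, h2, add_zero]
    · show Submodule.projectionOnto (LinearMap.ker q1) (LinearMap.range s2) hcomplT2.symm
        (s2 p + (x : ↥T)) = x
      rw [map_add,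
        Submodule.projectionOnto_apply_of_mem_right hcomplT2.symm (x := s2 p) ⟨p, rfl⟩,
        zero_add, Submodule.projectionOnto_apply_left]
  have hker_q1 : ∀ p : P, q1 (hhT (0, p)) = 0 := by
    intro p
    show (LinearMap.fst R P M) (g (hh (0, p))) = 0
    rw [hgh]
    rfl
  let e : P →ₗ[R] ↥(LinearMap.ker q1) :=
    LinearMap.codRestrict _ (hhT ∘ₗ LinearMap.inr R P P)
      (fun p => LinearMap.mem_ker.mpr (hker_q1 p))
  have hesurj : Surjective e := by
    rintro ⟨x, hx⟩
    obtain ⟨⟨a, b⟩, hab⟩ := LinearMap.mem_range.mp x.2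
    have h0 : (LinearMap.fst R P M) (g ((x : Q))) = 0 := LinearMap.mem_ker.mp hx
    have ha : a = 0 := by
      rw [← hab] at h0
      rw [hgh] at h0
      exact h0
    refine ⟨b, ?_⟩
    apply Subtype.ext
    apply Subtype.ext
    show hh (0, b) = (x : Q)
    rw [← hab, ha]
  haveI hprojK : Module.Projective R ↥(LinearMap.ker q1) :=
    hPc.2 ↥(LinearMap.ker q1) P e hesurj inferInstance hPcPK
  have hkerq1_eq : LinearMap.ker q1 = Submodule.comap T.subtype X := by
    ext x
    rw [hXdef]
    constructor
    · intro hx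
      exact Submodule.mem_comap.mpr
        (Submodule.mem_inf.mpr ⟨LinearMap.mem_ker.mpr (LinearMap.mem_ker.mp hx), x.2⟩)
    · intro hx
      exact LinearMap.mem_ker.mpr
        (LinearMap.mem_ker.mp (Submodule.mem_inf.mp (Submodule.mem_comap.mp hx)).1)
  haveI hprojX : Module.Projective R ↥X := by
    haveI : Module.Projective R ↥(Submodule.comap T.subtype X) := hkerq1_eq ▸ hprojK
    exact Module.Projective.of_equiv (Submodule.comapSubtypeEquivOfLe hXT)
  set S₁c : Submodule R ↥Xh := Submodule.comap Xh.subtype S₁ with hS₁cdef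
  set Xc : Submodule R ↥Xh := Submodule.comap Xh.subtype X with hXcdef
  have hc_sup : S₁c ⊔ Xc = ⊤ := by
    apply hmapinj
    rw [Submodule.map_sup, hS₁cdef, hXcdef, Submodule.map_comap_subtype,
      Submodule.map_comap_subtype, Submodule.map_subtype_top,
      inf_eq_right.mpr hS₁Xh, inf_eq_right.mpr hXXh]
    exact hdec_sup
  have hc_inf : S₁c ⊓ Xc = ⊥ := by
    apply hmapinj
    rw [Submodule.map_inf _ Xh.injective_subtype, hS₁cdef, hXcdef,
      Submodule.map_comap_subtype, Submodule.map_comap_subtype, Submodule.map_bot,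
      inf_eq_right.mpr hS₁Xh, inf_eq_right.mpr hXXh]
    exact hdec_inf
  have hcc : IsCompl S₁c Xc := ⟨disjoint_iff.mpr hc_inf, codisjoint_iff.mpr hc_sup⟩
  haveI hpS₁c : Module.Projective R ↥S₁c := by
    haveI := hS₁proj
    exact Module.Projective.of_equiv (Submodule.comapSubtypeEquivOfLe hS₁Xh).symm
  haveI hpXc : Module.Projective R ↥Xc :=
    Module.Projective.of_equiv (Submodule.comapSubtypeEquivOfLe hXXh).symm
  haveI hprojXh : Module.Projective R ↥Xh := by
    refine Module.Projective.of_split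
      (LinearMap.prod (Submodule.projectionOnto S₁c Xc hcc)
        (Submodule.projectionOnto Xc S₁c hcc.symm))
      (LinearMap.coprod S₁c.subtype Xc.subtype) ?_
    apply LinearMap.ext
    intro x
    exact Submodule.projection_add_projection_eq_self hcc x
  exact ⟨⟨↥Xh, φ, hφsurj, hprojXh, hker_le, hpsd⟩⟩
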